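/- arXiv:0904.3300 — 2 statements merged into one kernel-verified Lean document; each statement's English description precedes it below -/
import Mathlib

section
/- With ω as above, ∫_{Δ^{2s}} dω equals (-1)^{u+v+1} · (a_0! ⋯ a_{2s}!)/((Σ a_j) + 2s - 1)! if a_u = 0 and a_v > 0; equals (-1)^{u+v} · (a_0! ⋯ a_{2s}!)/((Σ a_j) + 2s - 1)! if a_v = 0 and a_u > 0; and equals 0 if both a_u, a_v > 0 or both a_u = a_v = 0. -/
open MeasureTheory

/-- The integral over the standard `n`-simplex `Δⁿ` of the monomial top-degree form
`x_0^{a_0} ⋯ x_n^{a_n} dx_0 ∧ ⋯ ∧ \hat{dx_v} ∧ ⋯ ∧ dx_n`, computed by passing to the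
coordinates `(x_1, …, x_n)` (with `x_0 = 1 - Σ_{i ≥ 1} x_i`) over the region
`{x_i ≥ 0, Σ x_i ≤ 1}`, including the orientation sign `(-1)^v`. -/
noncomputable def monFormIntegral (n : ℕ) (a : Fin (n + 1) → ℕ) (v : Fin (n + 1)) : ℝ :=
  (-1 : ℝ) ^ (v : ℕ) *
    ∫ y in {y : Fin n → ℝ | (∀ i, 0 ≤ y i) ∧ ∑ i, y i ≤ 1},
      ((1 - ∑ i, y i) ^ (a 0) * ∏ i : Fin n, (y i) ^ (a i.succ))


lemma beta_nat (p q : ℕ) : ∫ t in (0:ℝ)..1, t ^ p * (1 - t) ^ q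
    = (p.factorial * q.factorial : ℝ) / ((p + q + 1).factorial) := by
  induction p generalizing q with
  | zero =>
    simp only [pow_zero, one_mul]
    rw [intervalIntegral.integral_comp_sub_left ((fun x : ℝ => x ^ q)) 1]
    simp only [sub_self, sub_zero, integral_pow]
    rw [Nat.factorial_zero, show 0 + q + 1 = q + 1 from by omega, Nat.factorial_succ]
    have h1 : ((q:ℝ) + 1) ≠ 0 := by positivity
    have h2 : ((q.factorial : ℝ)) ≠ 0 := by exact_mod_cast Nat.factorial_ne_zero _
    push_cast
    field_simp
    simp
  | succ p ih =>
    have hq1 : ((q:ℝ) + 1) ≠ 0 := by positivity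
    have hu : ∀ x ∈ Set.uIcc (0:ℝ) 1, HasDerivAt (fun x : ℝ => x ^ (p+1)) (((p:ℝ)+1) * x ^ p) x := by
      intro x _
      simpa using hasDerivAt_pow (p+1) x
    have hv : ∀ x ∈ Set.uIcc (0:ℝ) 1, HasDerivAt (fun x : ℝ => -((1-x) ^ (q+1)) / ((q:ℝ)+1)) ((1-x) ^ q) x := by
      intro x _
      have h1 : HasDerivAt (fun x : ℝ => (1-x) ^ (q+1)) (-(((q:ℝ)+1) * (1-x) ^ q)) x := by
        have h2 : HasDerivAt (fun x : ℝ => 1 - x) (-1 : ℝ) x := by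
          simpa using ((hasDerivAt_id x).const_sub 1)
        have := (hasDerivAt_pow (q+1) (1-x)).comp x h2
        refine this.congr_deriv ?_
        push_cast
        ring
      have h3 := (h1.neg).div_const ((q:ℝ)+1)
      refine h3.congr_deriv ?_
      field_simp
    have hiu : IntervalIntegrable (fun x : ℝ => ((p:ℝ)+1) * x ^ p) volume 0 1 :=
      (by continuity : Continuous fun x : ℝ => ((p:ℝ)+1) * x ^ p).intervalIntegrable _ _
    have hiv : IntervalIntegrable (fun x : ℝ => (1-x) ^ q) volume 0 1 :=
      (by continuity : Continuous fun x : ℝ => (1-x) ^ q).intervalIntegrable _ _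
    have key := intervalIntegral.integral_mul_deriv_eq_deriv_mul hu hv hiu hiv
    rw [key]
    have : (fun x : ℝ => ((p:ℝ)+1) * x ^ p * (-((1-x) ^ (q+1)) / ((q:ℝ)+1)))
        = fun x : ℝ => (-((p:ℝ)+1) / ((q:ℝ)+1)) * (x ^ p * (1-x) ^ (q+1)) := by
      funext x; field_simp
    rw [this, intervalIntegral.integral_const_mul, ih (q+1),
      show p + (q+1) + 1 = p + 1 + q + 1 from by omega]
    have hfne : ((p + 1 + q + 1).factorial : ℝ) ≠ 0 := by
      exact_mod_cast Nat.factorial_ne_zero _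
    rw [show (p+1+q+1) = (p + q + 1) + 1 from by omega] at *
    rw [Nat.factorial_succ (q), Nat.factorial_succ (p), Nat.factorial_succ (p+q+1)]
    have h2 : ((p+q+1).factorial : ℝ) ≠ 0 := by exact_mod_cast Nat.factorial_ne_zero _
    push_cast
    norm_num
    field_simp
    ring

lemma beta_scaled2 (p q : ℕ) {c : ℝ} (hc : 0 ≤ c) :
    ∫ t in (0:ℝ)..c, t ^ p * (c - t) ^ q
      = (p.factorial * q.factorial : ℝ) / ((p + q + 1).factorial) * c ^ (p + q + 1) := by
  rcases eq_or_lt_of_le hc with h | h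
  · simp [← h]
  · have hkey := intervalIntegral.smul_integral_comp_mul_left (a := (0:ℝ)) (b := 1)
      (fun t => t ^ p * (c - t) ^ q) c
    rw [mul_zero, mul_one] at hkey
    rw [← hkey]
    have : (fun x : ℝ => (c * x) ^ p * (c - c * x) ^ q)
        = fun x : ℝ => (c ^ (p + q)) * (x ^ p * (1 - x) ^ q) := by
      funext x
      rw [show c - c * x = c * (1 - x) from by ring, mul_pow, mul_pow, pow_add]
      ring
    rw [smul_eq_mul, this, intervalIntegral.integral_const_mul, beta_nat]
    ring


def corner (n : ℕ) (c : ℝ) : Set (Fin n → ℝ) := {y | (∀ i, 0 ≤ y i) ∧ ∑ i, y i ≤ c}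

lemma corner_meas (n : ℕ) (c : ℝ) : MeasurableSet (corner n c) := by
  have h1 : MeasurableSet {y : Fin n → ℝ | ∀ i, 0 ≤ y i} := by
    rw [Set.setOf_forall]
    exact MeasurableSet.iInter fun i => measurableSet_le measurable_const (measurable_pi_apply i)
  have h2 : MeasurableSet {y : Fin n → ℝ | ∑ i, y i ≤ c} := by
    exact measurableSet_le (by fun_prop) measurable_const
  exact h1.inter h2

lemma dirichlet_lintegral (n : ℕ) (b : Fin n → ℕ) (m : ℕ) (c : ℝ) (hc : 0 ≤ c) :
    ∫⁻ y in corner n c, ENNReal.ofReal ((c - ∑ i, y i) ^ m * ∏ i, (y i) ^ (b i)) =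
    ENNReal.ofReal (((∏ i, (b i).factorial) * m.factorial : ℝ)
      / (((m + ∑ i, b i + n).factorial : ℕ) : ℝ) * c ^ (m + ∑ i, b i + n)) := by
  induction n generalizing c with
  | zero =>
    have hset : corner 0 c = Set.univ := by
      ext y
      simp [corner, hc]
    rw [hset, Measure.restrict_univ]
    simp only [Finset.univ_eq_empty, Finset.sum_empty, Finset.prod_empty, sub_zero, mul_one,
      Nat.add_zero, add_zero, one_mul]
    rw [lintegral_const]
    have : (volume : Measure (Fin 0 → ℝ)) Set.univ = 1 := by
      simp [volume_pi, Measure.pi_univ]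
    rw [this, mul_one]
    congr 1
    have : ((m.factorial : ℝ)) ≠ 0 := by exact_mod_cast Nat.factorial_ne_zero _
    field_simp
    simp
  | succ n ih =>
    have hS : MeasurableSet (corner (n+1) c) := corner_meas _ _
    set g : (Fin (n+1) → ℝ) → ENNReal := fun y => ENNReal.ofReal ((c - ∑ i, y i) ^ m * ∏ i, (y i) ^ (b i)) with hg
    have hgmeas : Measurable g := by
      apply Measurable.ennreal_ofReal
      fun_prop
    set h : (Fin (n+1) → ℝ) → ENNReal := (corner (n+1) c).indicator g with hh
    have hhmeas : Measurable h := hgmeas.indicator hS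
    have hmp := measurePreserving_piFinSuccAbove (fun _ : Fin (n+1) => (volume : Measure ℝ)) 0
    set e := MeasurableEquiv.piFinSuccAbove (fun _ : Fin (n+1) => ℝ) 0 with he
    have hcomp := hmp.lintegral_comp_emb e.measurableEmbedding (fun p => h (e.symm p))
    simp only [MeasurableEquiv.symm_apply_apply] at hcomp
    rw [← lintegral_indicator hS, ← hh, volume_pi, hcomp,
      lintegral_prod (fun p => h (e.symm p)) ((hhmeas.comp e.symm.measurable).aemeasurable)]
    have hesymm : ∀ (t : ℝ) (z : Fin n → ℝ), e.symm (t, z) = Fin.cons t z := by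
      intro t z
      simp [he, MeasurableEquiv.piFinSuccAbove_symm_apply, Fin.insertNth_zero', Fin.consEquiv]
    set N := m + (∑ i : Fin n, b (Fin.succ i)) + n with hN
    set K := ((∏ i : Fin n, (b (Fin.succ i)).factorial : ℕ) : ℝ) * ((m.factorial : ℕ) : ℝ)
      / ((N.factorial : ℕ) : ℝ) with hK
    have hKnn : 0 ≤ K := by positivity
    have key : ∀ t : ℝ, (∫⁻ z, h (e.symm (t, z)) ∂(Measure.pi fun _ : Fin n => (volume : Measure ℝ)))
        = (Set.Icc (0:ℝ) c).indicator (fun t => ENNReal.ofReal (t ^ (b 0) * (K * (c - t) ^ N))) t := by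
      intro t
      by_cases ht0 : 0 ≤ t
      · by_cases htc : t ≤ c
        · have hmem : ∀ z : Fin n → ℝ, (Fin.cons t z ∈ corner (n+1) c) ↔ (z ∈ corner n (c - t)) := by
            intro z
            simp only [corner, Set.mem_setOf_eq, Fin.forall_fin_succ, Fin.cons_zero, Fin.cons_succ,
              Fin.sum_cons]
            constructor
            · rintro ⟨⟨h0, hi⟩, hsum⟩
              exact ⟨hi, by linarith⟩
            · rintro ⟨hi, hsum⟩
              exact ⟨⟨ht0, hi⟩, by linarith⟩
          have hptw : (fun z : Fin n → ℝ => h (e.symm (t, z)))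
              = (corner n (c - t)).indicator (fun z => ENNReal.ofReal (t ^ (b 0)) *
                  ENNReal.ofReal ((c - t - ∑ i, z i) ^ m * ∏ i, (z i) ^ (b (Fin.succ i)))) := by
            funext z
            rw [hesymm t z, hh]
            by_cases hz : z ∈ corner n (c - t)
            · rw [Set.indicator_of_mem ((hmem z).mpr hz), Set.indicator_of_mem hz, hg]
              rw [← ENNReal.ofReal_mul (by positivity)]
              congr 1
              simp only [Fin.sum_cons, Fin.prod_univ_succ, Fin.cons_zero, Fin.cons_succ]
              ring_nf
            · rw [Set.indicator_of_notMem (fun hm => hz ((hmem z).mp hm)),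
                Set.indicator_of_notMem hz]
          rw [hptw, lintegral_indicator (corner_meas _ _),
            lintegral_const_mul _ (Measurable.ennreal_ofReal (by fun_prop)),
            show (Measure.pi fun _ : Fin n => (volume : Measure ℝ)) = volume from volume_pi.symm,
            ih (fun i => b (Fin.succ i)) (c - t) (by linarith),
            Set.indicator_of_mem (Set.mem_Icc.2 ⟨ht0, htc⟩),
            ← ENNReal.ofReal_mul (by positivity)]
        · have hz : ∀ z : Fin n → ℝ, h (e.symm (t, z)) = 0 := by
            intro z
            rw [hesymm t z, hh]
            apply Set.indicator_of_notMem
            rintro ⟨h1, h2⟩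
            rw [Fin.sum_cons] at h2
            have hzn : 0 ≤ ∑ i, z i := Finset.sum_nonneg fun i _ => by
              simpa [Fin.cons_succ] using h1 (Fin.succ i)
            linarith
          simp only [hz, lintegral_zero]
          rw [Set.indicator_of_notMem (by simp only [Set.mem_Icc, not_and]; intro _; linarith)]
      · have hz : ∀ z : Fin n → ℝ, h (e.symm (t, z)) = 0 := by
          intro z
          rw [hesymm t z, hh]
          apply Set.indicator_of_notMem
          rintro ⟨h1, _⟩
          exact ht0 (by simpa [Fin.cons_zero] using h1 0)
        simp only [hz, lintegral_zero]
        rw [Set.indicator_of_notMem (by simp only [Set.mem_Icc, not_and]; intro h'; exact absurd h' ht0)]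
    rw [lintegral_congr key, lintegral_indicator measurableSet_Icc]
    have hInt : Integrable (fun t : ℝ => t ^ (b 0) * (K * (c - t) ^ N))
        (volume.restrict (Set.Icc 0 c)) :=
      (Continuous.integrableOn_Icc (by continuity))
    have hnn : 0 ≤ᵐ[volume.restrict (Set.Icc (0:ℝ) c)] fun t : ℝ => t ^ (b 0) * (K * (c - t) ^ N) := by
      apply ae_restrict_of_forall_mem measurableSet_Icc
      intro t ht
      exact mul_nonneg (pow_nonneg ht.1 _)
        (mul_nonneg hKnn (pow_nonneg (sub_nonneg.2 ht.2) _))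
    rw [← ofReal_integral_eq_lintegral_ofReal hInt hnn]
    congr 1
    rw [MeasureTheory.integral_Icc_eq_integral_Ioc, ← intervalIntegral.integral_of_le hc]
    have : (fun t : ℝ => t ^ (b 0) * (K * (c - t) ^ N)) = fun t : ℝ => K * (t ^ (b 0) * (c - t) ^ N) := by
      funext t; ring
    rw [this, intervalIntegral.integral_const_mul, beta_scaled2 (b 0) N hc]
    rw [Fin.prod_univ_succ, Fin.sum_univ_succ]
    rw [show m + (b 0 + ∑ i : Fin n, b (Fin.succ i)) + (n+1) = b 0 + N + 1 from by rw [hN]; omega]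
    have h1 : ((N.factorial : ℕ) : ℝ) ≠ 0 := by exact_mod_cast Nat.factorial_ne_zero _
    have h2 : (((b 0 + N + 1).factorial : ℕ) : ℝ) ≠ 0 := by exact_mod_cast Nat.factorial_ne_zero _
    rw [hK]
    push_cast
    field_simp


lemma dirichlet_integral (n : ℕ) (a : Fin (n+1) → ℕ) :
    ∫ y in {y : Fin n → ℝ | (∀ i, 0 ≤ y i) ∧ ∑ i, y i ≤ 1},
        ((1 - ∑ i, y i) ^ (a 0) * ∏ i : Fin n, (y i) ^ (a i.succ))
      = ((∏ j, (a j).factorial : ℕ) : ℝ) / ((((∑ j, a j) + n).factorial : ℕ) : ℝ) := by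
  have hset : {y : Fin n → ℝ | (∀ i, 0 ≤ y i) ∧ ∑ i, y i ≤ 1} = corner n 1 := rfl
  rw [hset]
  have hnn : 0 ≤ᵐ[volume.restrict (corner n 1)]
      fun y : Fin n → ℝ => (1 - ∑ i, y i) ^ (a 0) * ∏ i : Fin n, (y i) ^ (a i.succ) := by
    apply ae_restrict_of_forall_mem (corner_meas n 1)
    rintro y ⟨h1, h2⟩
    apply mul_nonneg (pow_nonneg (by linarith) _)
    exact Finset.prod_nonneg fun i _ => pow_nonneg (h1 i) _
  have hmeas : AEStronglyMeasurable
      (fun y : Fin n → ℝ => (1 - ∑ i, y i) ^ (a 0) * ∏ i : Fin n, (y i) ^ (a i.succ))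
      (volume.restrict (corner n 1)) := by
    apply Continuous.aestronglyMeasurable
    fun_prop
  rw [integral_eq_lintegral_of_nonneg_ae hnn hmeas]
  rw [dirichlet_lintegral n (fun i => a i.succ) (a 0) 1 zero_le_one]
  rw [ENNReal.toReal_ofReal (by positivity)]
  rw [one_pow, mul_one, Fin.prod_univ_succ, Fin.sum_univ_succ]
  rw [show a 0 + (∑ i : Fin n, a i.succ) + n = (a 0 + ∑ i : Fin n, a i.succ) + n from by omega]
  push_cast
  ring

lemma monFormIntegral_eq (n : ℕ) (a : Fin (n+1) → ℕ) (v : Fin (n+1)) :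
    monFormIntegral n a v = (-1 : ℝ) ^ (v : ℕ) *
      (((∏ j, (a j).factorial : ℕ) : ℝ) / ((((∑ j, a j) + n).factorial : ℕ) : ℝ)) := by
  rw [monFormIntegral, dirichlet_integral]

/-- For the monomial `(2s-1)`-form
`ω = x_0^{a_0} ⋯ x_{2s}^{a_{2s}} dx_0 ∧ ⋯ ∧ \hat{dx_u} ∧ ⋯ ∧ \hat{dx_v} ∧ ⋯ ∧ dx_{2s}`
on `Δ^{2s}` (with `0 ≤ u < v ≤ 2s`), the integral `∫_{Δ^{2s}} dω`, where
`dω = (-1)^u a_u x^{a - e_u} dx_0 ∧ ⋯ ∧ \hat{dx_v} ∧ ⋯ + (-1)^{v+1} a_v x^{a - e_v}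
dx_0 ∧ ⋯ ∧ \hat{dx_u} ∧ ⋯`, equals: `(-1)^{u+v+1} (a_0! ⋯ a_{2s}!)/((Σ a_j) + 2s - 1)!` if
`a_u = 0, a_v > 0`; `(-1)^{u+v} (a_0! ⋯ a_{2s}!)/((Σ a_j) + 2s - 1)!` if `a_v = 0, a_u > 0`;
and `0` if both `a_u, a_v > 0` or both are `0`. -/
theorem integral_d_monomial_form (s : ℕ) (hs : 1 ≤ s) (a : Fin (2 * s + 1) → ℕ)
    (u v : Fin (2 * s + 1)) (huv : u < v) :
    (-1 : ℝ) ^ (u : ℕ) * (a u : ℝ) * monFormIntegral (2 * s)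
        (Function.update a u (a u - 1)) v +
      (-1 : ℝ) ^ ((v : ℕ) + 1) * (a v : ℝ) * monFormIntegral (2 * s)
        (Function.update a v (a v - 1)) u =
    (if a u = 0 ∧ a v = 0 then 0
     else if a u = 0 then
       (-1 : ℝ) ^ ((u : ℕ) + (v : ℕ) + 1) * ((∏ j, Nat.factorial (a j) : ℕ) : ℝ) /
         ((Nat.factorial ((∑ j, a j) + (2 * s - 1)) : ℕ) : ℝ)
     else if a v = 0 then
       (-1 : ℝ) ^ ((u : ℕ) + (v : ℕ)) * ((∏ j, Nat.factorial (a j) : ℕ) : ℝ) /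
         ((Nat.factorial ((∑ j, a j) + (2 * s - 1)) : ℕ) : ℝ)
     else 0) := by
  have hne : u ≠ v := ne_of_lt huv
  -- generic facts about updates at a point w with a w > 0
  have hprod : ∀ w : Fin (2 * s + 1), 0 < a w →
      (a w) * ∏ j, (Function.update a w (a w - 1) j).factorial = ∏ j, (a j).factorial := by
    intro w hw
    rw [← Finset.mul_prod_erase Finset.univ (fun j => (Function.update a w (a w - 1) j).factorial)
      (Finset.mem_univ w),
      ← Finset.mul_prod_erase Finset.univ (fun j => (a j).factorial) (Finset.mem_univ w)]
    have herase : ∏ j ∈ Finset.univ.erase w, (Function.update a w (a w - 1) j).factorial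
        = ∏ j ∈ Finset.univ.erase w, (a j).factorial :=
      Finset.prod_congr rfl fun j hj => by
        rw [Function.update_of_ne (Finset.ne_of_mem_erase hj)]
    rw [herase, Function.update_self, ← mul_assoc, Nat.mul_factorial_pred hw.ne']
  have hsum : ∀ w : Fin (2 * s + 1), 0 < a w →
      (∑ j, Function.update a w (a w - 1) j) + 2 * s = (∑ j, a j) + (2 * s - 1) := by
    intro w hw
    rw [Finset.sum_update_of_mem (Finset.mem_univ w), ← Finset.erase_eq]
    have h2 := Finset.add_sum_erase Finset.univ a (Finset.mem_univ w)
    omega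
  rcases Nat.eq_zero_or_pos (a u) with hu0 | hupos
  · rcases Nat.eq_zero_or_pos (a v) with hv0 | hvpos
    · rw [if_pos ⟨hu0, hv0⟩, hu0, hv0]
      push_cast
      ring
    · rw [if_neg (fun hh => by omega), if_pos hu0]
      rw [monFormIntegral_eq, monFormIntegral_eq, hsum v hvpos, hu0]
      have hp := hprod v hvpos
      have hp' : (a v : ℝ) * ((∏ j, (Function.update a v (a v - 1) j).factorial : ℕ) : ℝ)
          = ((∏ j, (a j).factorial : ℕ) : ℝ) := by exact_mod_cast congrArg (Nat.cast : ℕ → ℝ) hp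
      push_cast at hp' ⊢
      linear_combination ((-1:ℝ)^((u:ℕ)+(v:ℕ)+1) / (((∑ j, a j) + (2*s-1)).factorial : ℝ)) * hp' 
  · rcases Nat.eq_zero_or_pos (a v) with hv0 | hvpos
    · rw [if_neg (fun hh => by omega), if_neg (by omega), if_pos hv0]
      rw [monFormIntegral_eq, monFormIntegral_eq, hsum u hupos, hv0]
      have hp := hprod u hupos
      have hp' : (a u : ℝ) * ((∏ j, (Function.update a u (a u - 1) j).factorial : ℕ) : ℝ)
          = ((∏ j, (a j).factorial : ℕ) : ℝ) := by exact_mod_cast congrArg (Nat.cast : ℕ → ℝ) hp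
      push_cast at hp' ⊢
      linear_combination ((-1:ℝ)^((u:ℕ)+(v:ℕ)) / (((∑ j, a j) + (2*s-1)).factorial : ℝ)) * hp' 
    · rw [if_neg (fun hh => by omega), if_neg (by omega), if_neg (by omega)]
      rw [monFormIntegral_eq, monFormIntegral_eq, hsum u hupos, hsum v hvpos]
      have hpu := hprod u hupos
      have hpv := hprod v hvpos
      have hpu' : (a u : ℝ) * ((∏ j, (Function.update a u (a u - 1) j).factorial : ℕ) : ℝ)
          = ((∏ j, (a j).factorial : ℕ) : ℝ) := by exact_mod_cast congrArg (Nat.cast : ℕ → ℝ) hpu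
      have hpv' : (a v : ℝ) * ((∏ j, (Function.update a v (a v - 1) j).factorial : ℕ) : ℝ)
          = ((∏ j, (a j).factorial : ℕ) : ℝ) := by exact_mod_cast congrArg (Nat.cast : ℕ → ℝ) hpv
      push_cast at hpu' hpv' ⊢
      linear_combination ((-1:ℝ)^((u:ℕ)+(v:ℕ)) / (((∑ j, a j) + (2*s-1)).factorial : ℝ)) * hpu'
        - ((-1:ℝ)^((u:ℕ)+(v:ℕ)) / (((∑ j, a j) + (2*s-1)).factorial : ℝ)) * hpv'
end

section
/- For a finite group G and a ℤ[G]-module M, the first homology H_1(G; M) is isomorphic to the kernel of the map ℤ ⊗_{ℤ[G]} (IG ⊗ M) → M sending 1 ⊗ (g-1) ⊗ m to (g^{-1} - 1)m, where IG is the augmentation ideal and G acts diagonally on IG ⊗ M. -/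
/-- The augmentation ideal `IG = ker(ℤ[G] → ℤ)` of the integral group ring. -/
noncomputable def augIdeal (G : Type*) [Group G] : Ideal (MonoidAlgebra ℤ G) :=
  RingHom.ker (MonoidAlgebra.lift ℤ ℤ G 1).toRingHom

/-- The antipode `Σ c_g g ↦ Σ c_g g⁻¹` of the group ring. -/
noncomputable def antipode {G : Type*} [Group G] (a : MonoidAlgebra ℤ G) : MonoidAlgebra ℤ G :=
  MonoidAlgebra.mapDomain (fun g : G => g⁻¹) a

/-- First differential `M ⊗_{ℤ[G]} ℤ[G] → M` of the inhomogeneous bar complex: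
`(g ⊗ m) ↦ (g⁻¹ - 1)·m`. -/
noncomputable def barD1 (G : Type*) [Group G] (M : Type*) [AddCommGroup M]
    [Module (MonoidAlgebra ℤ G) M] : (G →₀ M) →+ M :=
  Finsupp.liftAddHom fun g =>
    AddMonoidHom.mk' (fun m => (MonoidAlgebra.of ℤ G g⁻¹) • m - m)
      (by intro a b; rw [smul_add]; abel)

/-- Second differential of the inhomogeneous bar complex:
`((g,h) ⊗ m) ↦ h ⊗ g⁻¹m - gh ⊗ m + g ⊗ m`. -/
noncomputable def barD2 (G : Type*) [Group G] (M : Type*) [AddCommGroup M]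
    [Module (MonoidAlgebra ℤ G) M] : ((G × G) →₀ M) →+ (G →₀ M) :=
  Finsupp.liftAddHom fun gh =>
    AddMonoidHom.mk'
      (fun m => Finsupp.single gh.2 ((MonoidAlgebra.of ℤ G gh.1⁻¹) • m) -
        Finsupp.single (gh.1 * gh.2) m + Finsupp.single gh.1 m)
      (by
        intro a b
        rw [smul_add, Finsupp.single_add, Finsupp.single_add, Finsupp.single_add]
        abel)

/-- The relations defining the coinvariants `ℤ ⊗_{ℤ[G]} (IG ⊗ M)` of the diagonal action:
`g·x - x` for `x = a ⊗ m` a pure tensor, `g·(a ⊗ m) = (ga) ⊗ (gm)`. -/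
noncomputable def coinvRel (G : Type*) [Group G] (M : Type*) [AddCommGroup M]
    [Module (MonoidAlgebra ℤ G) M] :
    AddSubgroup (TensorProduct ℤ (↥(augIdeal G)) M) :=
  AddSubgroup.closure
    {t | ∃ (g : G) (a : ↥(augIdeal G)) (m : M),
      t = (⟨MonoidAlgebra.of ℤ G g * (a : MonoidAlgebra ℤ G),
            Ideal.mul_mem_left _ _ a.2⟩ : ↥(augIdeal G)) ⊗ₜ[ℤ]
          ((MonoidAlgebra.of ℤ G g) • m) - (a : ↥(augIdeal G)) ⊗ₜ[ℤ] m}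


/- auxiliary lemmas -/


lemma of_sub_one_mem (G : Type*) [Group G] (g : G) :
    MonoidAlgebra.of ℤ G g - 1 ∈ augIdeal G := by
  simp [augIdeal, RingHom.mem_ker, map_sub]

lemma augIdeal_mem_closure {G : Type*} [Group G] {a : MonoidAlgebra ℤ G}
    (ha : a ∈ augIdeal G) :
    a ∈ AddSubgroup.closure {x : MonoidAlgebra ℤ G | ∃ g : G, x = MonoidAlgebra.of ℤ G g - 1} := by
  have key : ∀ b : MonoidAlgebra ℤ G,
      b - ((MonoidAlgebra.lift ℤ ℤ G 1) b) • (1 : MonoidAlgebra ℤ G) ∈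
        AddSubgroup.closure {x : MonoidAlgebra ℤ G | ∃ g : G, x = MonoidAlgebra.of ℤ G g - 1} := by
    intro b
    have hb : b ∈ AddSubmonoid.closure
        {f : MonoidAlgebra ℤ G | ∃ g c, f = MonoidAlgebra.single g c} := by
      have key2 : ∀ x : G →₀ ℤ, (MonoidAlgebra.ofCoeff x : MonoidAlgebra ℤ G) ∈
          AddSubmonoid.closure
            {f : MonoidAlgebra ℤ G | ∃ g c, f = MonoidAlgebra.single g c} := by
        intro x
        induction x using Finsupp.induction_linear with
        | zero => exact zero_mem _
        | add x y hx hy => exact add_mem hx hy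
        | single g c => exact AddSubmonoid.subset_closure ⟨g, c, rfl⟩
      exact key2 b.coeff
    induction hb using AddSubmonoid.closure_induction with
    | mem x hx =>
        obtain ⟨g, c, rfl⟩ := hx
        have h1 : (MonoidAlgebra.lift ℤ ℤ G 1) (MonoidAlgebra.single g c) = c := by
          rw [MonoidAlgebra.lift_single]; simp
        have h2 : (MonoidAlgebra.single g c : MonoidAlgebra ℤ G) - c • (1 : MonoidAlgebra ℤ G)
            = c • (MonoidAlgebra.of ℤ G g - 1) := by
          rw [smul_sub]
          congr 1
          rw [MonoidAlgebra.of_apply, MonoidAlgebra.smul_single', mul_one]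
        rw [h1, h2]
        have hmem : MonoidAlgebra.of ℤ G g - 1 ∈
            {x : MonoidAlgebra ℤ G | ∃ g : G, x = MonoidAlgebra.of ℤ G g - 1} := ⟨g, rfl⟩
        exact AddSubgroup.zsmul_mem _ (AddSubgroup.subset_closure hmem) c
    | zero =>
        simpa using AddSubgroup.zero_mem _
    | add x y _ _ hx hy =>
        have h3 : (x + y : MonoidAlgebra ℤ G) -
            ((MonoidAlgebra.lift ℤ ℤ G 1) (x + y)) • (1 : MonoidAlgebra ℤ G)
            = (x - ((MonoidAlgebra.lift ℤ ℤ G 1) x) • (1 : MonoidAlgebra ℤ G))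
              + (y - ((MonoidAlgebra.lift ℤ ℤ G 1) y) • (1 : MonoidAlgebra ℤ G)) := by
          rw [map_add, add_smul]; abel
        rw [h3]; exact AddSubgroup.add_mem _ hx hy
  have h0 : (MonoidAlgebra.lift ℤ ℤ G 1) a = 0 := ha
  simpa [h0] using key a

lemma antipode_of_sub_one {G : Type*} [Group G] (g : G) :
    antipode (MonoidAlgebra.of ℤ G g - 1) = MonoidAlgebra.of ℤ G g⁻¹ - 1 := by
  have h : ∀ x : MonoidAlgebra ℤ G, antipode x =
      (AddMonoidHom.mk' (MonoidAlgebra.mapDomain (R := ℤ) (fun g : G => g⁻¹))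
        (MonoidAlgebra.mapDomain_add _)) x := fun x => rfl
  rw [h, map_sub]
  congr 1
  · exact MonoidAlgebra.mapDomain_single
  · show MonoidAlgebra.mapDomain (fun g : G => g⁻¹)
      (MonoidAlgebra.single (1 : G) (1 : ℤ)) = MonoidAlgebra.single (1 : G) (1 : ℤ)
    simpa using MonoidAlgebra.mapDomain_single

section Main

variable (G : Type*) [Group G] (M : Type*) [AddCommGroup M] [Module (MonoidAlgebra ℤ G) M]

/-- `phi : (G →₀ M) →+ coinvariants`, `single g m ↦ [(g-1) ⊗ m]`. -/
noncomputable def phi : (G →₀ M) →+ (TensorProduct ℤ (↥(augIdeal G)) M ⧸ coinvRel G M) :=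
  Finsupp.liftAddHom fun g =>
    AddMonoidHom.mk'
      (fun m => QuotientAddGroup.mk
        ((⟨MonoidAlgebra.of ℤ G g - 1, of_sub_one_mem G g⟩ : ↥(augIdeal G)) ⊗ₜ[ℤ] m))
      (by intro a b; rw [TensorProduct.tmul_add]; rfl)

lemma phi_single (g : G) (m : M) :
    phi G M (Finsupp.single g m) = QuotientAddGroup.mk
      ((⟨MonoidAlgebra.of ℤ G g - 1, of_sub_one_mem G g⟩ : ↥(augIdeal G)) ⊗ₜ[ℤ] m) := by
  simp [phi, Finsupp.liftAddHom_apply_single]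

lemma barD1_single (g : G) (m : M) :
    barD1 G M (Finsupp.single g m) = (MonoidAlgebra.of ℤ G g⁻¹) • m - m := by
  simp [barD1, Finsupp.liftAddHom_apply_single]

lemma barD2_single (g h : G) (m : M) :
    barD2 G M (Finsupp.single (g, h) m) =
      Finsupp.single h ((MonoidAlgebra.of ℤ G g⁻¹) • m) -
        Finsupp.single (g * h) m + Finsupp.single g m := by
  simp [barD2, Finsupp.liftAddHom_apply_single]

/-- `Faux : ℤ[G] →+ (M →+ Q)`, `single g c ↦ (m ↦ c • [single g m])`. -/
noncomputable def Faux : MonoidAlgebra ℤ G →+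
    (M →+ ((G →₀ M) ⧸ (barD2 G M).range)) :=
  (Finsupp.liftAddHom fun g =>
    (zmultiplesHom (M →+ ((G →₀ M) ⧸ (barD2 G M).range)))
      (AddMonoidHom.mk' (fun m => QuotientAddGroup.mk (Finsupp.single g m))
        (by intro a b; rw [Finsupp.single_add]; rfl))).comp
    MonoidAlgebra.coeffAddEquiv.toAddMonoidHom

lemma Faux_single (g : G) (c : ℤ) (m : M) :
    Faux G M (MonoidAlgebra.single g c) m =
      c • QuotientAddGroup.mk (Finsupp.single g m) := by
  unfold Faux
  erw [Finsupp.liftAddHom_apply_single]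
  rfl

lemma Faux_of (g : G) (m : M) :
    Faux G M (MonoidAlgebra.of ℤ G g) m = QuotientAddGroup.mk (Finsupp.single g m) := by
  rw [MonoidAlgebra.of_apply, Faux_single]; simp

lemma Faux_one (m : M) :
    Faux G M (1 : MonoidAlgebra ℤ G) m = QuotientAddGroup.mk (Finsupp.single (1:G) m) := by
  rw [MonoidAlgebra.one_def, Faux_single]; simp

lemma q1 (m : M) :
    (QuotientAddGroup.mk (Finsupp.single (1:G) m) :
      (G →₀ M) ⧸ (barD2 G M).range) = 0 := by
  rw [QuotientAddGroup.eq_zero_iff]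
  refine ⟨Finsupp.single ((1:G), (1:G)) m, ?_⟩
  rw [barD2_single]
  have h : (MonoidAlgebra.of ℤ G (1:G)⁻¹) • m = m := by
    rw [inv_one, map_one, one_smul]
  rw [h, one_mul]
  abel

lemma q2 (g h : G) (m : M) :
    (QuotientAddGroup.mk (Finsupp.single h m) : (G →₀ M) ⧸ (barD2 G M).range) =
      QuotientAddGroup.mk (Finsupp.single (g * h) ((MonoidAlgebra.of ℤ G g) • m)) -
      QuotientAddGroup.mk (Finsupp.single g ((MonoidAlgebra.of ℤ G g) • m)) := by
  rw [eq_sub_iff_add_eq, ← QuotientAddGroup.mk_add, ← sub_eq_zero, ← QuotientAddGroup.mk_sub,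
    QuotientAddGroup.eq_zero_iff]
  refine ⟨Finsupp.single (g, h) ((MonoidAlgebra.of ℤ G g) • m), ?_⟩
  rw [barD2_single]
  have : (MonoidAlgebra.of ℤ G g⁻¹) • (MonoidAlgebra.of ℤ G g) • m = m := by
    rw [smul_smul, ← map_mul, inv_mul_cancel, map_one, one_smul]
  rw [this]
  abel

/-- `theta : IG ⊗ M →+ (G →₀ M)/im d₂`, `a ⊗ m ↦ Faux a m`. -/
noncomputable def theta : TensorProduct ℤ (↥(augIdeal G)) M →+
    ((G →₀ M) ⧸ (barD2 G M).range) :=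
  TensorProduct.liftAddHom ((Faux G M).comp ((augIdeal G).subtype.toAddMonoidHom))
    (by
      intro r a n
      simp [map_zsmul])

lemma theta_tmul (a : ↥(augIdeal G)) (m : M) :
    theta G M (a ⊗ₜ[ℤ] m) = Faux G M (a : MonoidAlgebra ℤ G) m :=
  TensorProduct.liftAddHom_tmul _ _ _ _

lemma Faux_mul_smul_aux (g : G) (m : M) {x : MonoidAlgebra ℤ G}
    (hx : x ∈ AddSubgroup.closure
      {x : MonoidAlgebra ℤ G | ∃ g : G, x = MonoidAlgebra.of ℤ G g - 1}) :
    Faux G M (MonoidAlgebra.of ℤ G g * x) ((MonoidAlgebra.of ℤ G g) • m) = Faux G M x m := by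
  induction hx using AddSubgroup.closure_induction with
  | mem y hy =>
      obtain ⟨h, rfl⟩ := hy
      have e1 : MonoidAlgebra.of ℤ G g * (MonoidAlgebra.of ℤ G h - 1)
          = MonoidAlgebra.of ℤ G (g * h) - MonoidAlgebra.of ℤ G g := by
        rw [mul_sub, mul_one, ← map_mul]
      rw [e1, map_sub, map_sub, AddMonoidHom.sub_apply, AddMonoidHom.sub_apply,
        Faux_of, Faux_of, Faux_of, Faux_one, q1, ← q2]
      abel
  | zero =>
      rw [mul_zero, map_zero]; rfl
  | add x y _ _ hx hy =>
      rw [mul_add, map_add, map_add, AddMonoidHom.add_apply, AddMonoidHom.add_apply, hx, hy]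
  | neg x _ hx =>
      rw [mul_neg, map_neg, map_neg, AddMonoidHom.neg_apply, AddMonoidHom.neg_apply, hx]

lemma Faux_mul_smul (g : G) (m : M) {x : MonoidAlgebra ℤ G} (hx : x ∈ augIdeal G) :
    Faux G M (MonoidAlgebra.of ℤ G g * x) ((MonoidAlgebra.of ℤ G g) • m) = Faux G M x m :=
  Faux_mul_smul_aux G M g m (augIdeal_mem_closure hx)

lemma theta_rel : coinvRel G M ≤ (theta G M).ker := by
  rw [coinvRel]
  rw [AddSubgroup.closure_le]
  rintro t ⟨g, a, m, rfl⟩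
  rw [SetLike.mem_coe, AddMonoidHom.mem_ker, map_sub, theta_tmul, theta_tmul]
  rw [sub_eq_zero]
  exact Faux_mul_smul G M g m a.2

/-- The induced map on coinvariants. -/
noncomputable def theta' :
    (TensorProduct ℤ (↥(augIdeal G)) M ⧸ coinvRel G M) →+ ((G →₀ M) ⧸ (barD2 G M).range) :=
  QuotientAddGroup.lift (coinvRel G M) (theta G M) (fun _ hx => theta_rel G M hx)

lemma theta'_phi (y : G →₀ M) :
    theta' G M (phi G M y) = QuotientAddGroup.mk y := by
  have h : (theta' G M).comp (phi G M) = QuotientAddGroup.mk' (barD2 G M).range := by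
    apply Finsupp.addHom_ext
    intro g m
    rw [AddMonoidHom.comp_apply, phi_single]
    unfold theta'
    rw [QuotientAddGroup.lift_mk, theta_tmul]
    rw [show ((⟨MonoidAlgebra.of ℤ G g - 1, of_sub_one_mem G g⟩ : ↥(augIdeal G)) :
        MonoidAlgebra ℤ G) = MonoidAlgebra.of ℤ G g - 1 from rfl]
    rw [map_sub, AddMonoidHom.sub_apply, Faux_of, Faux_one, q1, sub_zero]
    rfl
  calc theta' G M (phi G M y) = ((theta' G M).comp (phi G M)) y := rfl
    _ = QuotientAddGroup.mk y := by rw [h]; rfl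

lemma phi_barD2 : (phi G M).comp (barD2 G M) = 0 := by
  apply Finsupp.addHom_ext
  rintro ⟨g, h⟩ m
  rw [AddMonoidHom.comp_apply, barD2_single, map_add, map_sub,
    phi_single, phi_single, phi_single, AddMonoidHom.zero_apply]
  rw [← QuotientAddGroup.mk_sub, ← QuotientAddGroup.mk_add, QuotientAddGroup.eq_zero_iff]
  set a : ↥(augIdeal G) := ⟨MonoidAlgebra.of ℤ G h - 1, of_sub_one_mem G h⟩ with ha
  have hsmul : (MonoidAlgebra.of ℤ G g) • ((MonoidAlgebra.of ℤ G g⁻¹) • m) = m := by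
    rw [smul_smul, ← map_mul, mul_inv_cancel, map_one, one_smul]
  have hg : (⟨MonoidAlgebra.of ℤ G g * (a : MonoidAlgebra ℤ G),
        Ideal.mul_mem_left _ _ a.2⟩ : ↥(augIdeal G)) ⊗ₜ[ℤ]
        ((MonoidAlgebra.of ℤ G g) • ((MonoidAlgebra.of ℤ G g⁻¹) • m)) -
        (a : ↥(augIdeal G)) ⊗ₜ[ℤ] ((MonoidAlgebra.of ℤ G g⁻¹) • m) ∈ coinvRel G M :=
    AddSubgroup.subset_closure ⟨g, a, (MonoidAlgebra.of ℤ G g⁻¹) • m, rfl⟩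
  have e0 : (⟨MonoidAlgebra.of ℤ G g * (a : MonoidAlgebra ℤ G),
        Ideal.mul_mem_left _ _ a.2⟩ : ↥(augIdeal G)) =
      (⟨MonoidAlgebra.of ℤ G (g * h) - 1, of_sub_one_mem G (g * h)⟩ : ↥(augIdeal G)) -
      (⟨MonoidAlgebra.of ℤ G g - 1, of_sub_one_mem G g⟩ : ↥(augIdeal G)) := by
    apply Subtype.ext
    show MonoidAlgebra.of ℤ G g * (MonoidAlgebra.of ℤ G h - 1) = _
    rw [mul_sub, mul_one, ← map_mul]
    show _ = (MonoidAlgebra.of ℤ G (g * h) - 1) - (MonoidAlgebra.of ℤ G g - 1)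
    abel
  rw [hsmul, e0, TensorProduct.sub_tmul] at hg
  have := AddSubgroup.neg_mem _ hg
  convert this using 1
  abel

lemma closure_le_aug {x : MonoidAlgebra ℤ G}
    (hx : x ∈ AddSubgroup.closure
      {x : MonoidAlgebra ℤ G | ∃ g : G, x = MonoidAlgebra.of ℤ G g - 1}) :
    x ∈ augIdeal G := by
  induction hx using AddSubgroup.closure_induction with
  | mem y hy => obtain ⟨g, rfl⟩ := hy; exact of_sub_one_mem G g
  | zero => exact zero_mem _
  | add x y _ _ hx hy => exact add_mem hx hy
  | neg x _ hx => exact neg_mem hx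

lemma phi_surj_aux (m : M) {x : MonoidAlgebra ℤ G}
    (hx : x ∈ AddSubgroup.closure
      {x : MonoidAlgebra ℤ G | ∃ g : G, x = MonoidAlgebra.of ℤ G g - 1}) :
    ∀ (hm : x ∈ augIdeal G), ∃ y : G →₀ M,
      phi G M y = QuotientAddGroup.mk ((⟨x, hm⟩ : ↥(augIdeal G)) ⊗ₜ[ℤ] m) := by
  induction hx using AddSubgroup.closure_induction with
  | mem z hz =>
      obtain ⟨g, rfl⟩ := hz
      intro hm
      exact ⟨Finsupp.single g m, by rw [phi_single]⟩
  | zero =>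
      intro hm
      refine ⟨0, ?_⟩
      rw [map_zero]
      rw [show (⟨(0 : MonoidAlgebra ℤ G), hm⟩ : ↥(augIdeal G)) = 0 from rfl,
        TensorProduct.zero_tmul]
      rfl
  | add x y hx' hy' ihx ihy =>
      intro hm
      obtain ⟨y1, h1⟩ := ihx (closure_le_aug G hx')
      obtain ⟨y2, h2⟩ := ihy (closure_le_aug G hy')
      refine ⟨y1 + y2, ?_⟩
      rw [map_add, h1, h2, ← QuotientAddGroup.mk_add]
      congr 1
      rw [show (⟨x + y, hm⟩ : ↥(augIdeal G)) =
        (⟨x, closure_le_aug G hx'⟩ : ↥(augIdeal G)) + ⟨y, closure_le_aug G hy'⟩ from rfl,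
        TensorProduct.add_tmul]
  | neg x hx' ihx =>
      intro hm
      obtain ⟨y1, h1⟩ := ihx (closure_le_aug G hx')
      refine ⟨-y1, ?_⟩
      rw [map_neg, h1, ← QuotientAddGroup.mk_neg]
      rfl

lemma phi_surj : Function.Surjective (phi G M) := by
  intro q
  obtain ⟨t, rfl⟩ := QuotientAddGroup.mk_surjective q
  induction t using TensorProduct.induction_on with
  | zero => exact ⟨0, by rw [map_zero]; rfl⟩
  | tmul a m =>
      obtain ⟨x, hm⟩ := a
      exact phi_surj_aux G M m (augIdeal_mem_closure hm) hm
  | add x y hx hy =>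
      obtain ⟨y1, h1⟩ := hx
      obtain ⟨y2, h2⟩ := hy
      exact ⟨y1 + y2, by rw [map_add, h1, h2]; rfl⟩

end Main


/-- For a finite group `G` and a `ℤ[G]`-module `M`, the first homology `H_1(G; M)` (the
middle homology `ker d₁ / im d₂` of the inhomogeneous bar complex) is isomorphic to the
kernel of the map `ℤ ⊗_{ℤ[G]} (IG ⊗ M) → M` sending `1 ⊗ (g - 1) ⊗ m` to `(g⁻¹ - 1)·m`
(equivalently, `1 ⊗ a ⊗ m ↦ S(a)·m` with `S` the antipode), where `IG` is the augmentation
ideal and `G` acts diagonally on `IG ⊗ M`. -/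
theorem h1_iso_ker_coinv_map (G : Type*) [Group G] [Finite G] (M : Type*) [AddCommGroup M]
    [Module (MonoidAlgebra ℤ G) M]
    (Ψ : (TensorProduct ℤ (↥(augIdeal G)) M ⧸ coinvRel G M) →+ M)
    (hΨ : ∀ (a : ↥(augIdeal G)) (m : M),
      Ψ (QuotientAddGroup.mk (a ⊗ₜ[ℤ] m)) = antipode (a : MonoidAlgebra ℤ G) • m) :
    Nonempty
      (((barD1 G M).ker ⧸ ((barD2 G M).range.addSubgroupOf (barD1 G M).ker)) ≃+ ↥Ψ.ker) := by
  have hcomp : Ψ.comp (phi G M) = barD1 G M := by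
    apply Finsupp.addHom_ext
    intro g m
    rw [AddMonoidHom.comp_apply, phi_single, hΨ, barD1_single]
    rw [show ((⟨MonoidAlgebra.of ℤ G g - 1, of_sub_one_mem G g⟩ : ↥(augIdeal G)) :
      MonoidAlgebra ℤ G) = MonoidAlgebra.of ℤ G g - 1 from rfl]
    rw [antipode_of_sub_one, sub_smul, one_smul]
  have hcomp' : ∀ y : G →₀ M, Ψ (phi G M y) = barD1 G M y :=
    fun y => DFunLike.congr_fun hcomp y
  set f : ↥(barD1 G M).ker →+ ↥Ψ.ker := AddMonoidHom.mk'
    (fun y => ⟨phi G M (y : G →₀ M), by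
      rw [AddMonoidHom.mem_ker, hcomp' (y : G →₀ M)]
      exact y.2⟩)
    (fun a b => by
      apply Subtype.ext
      show phi G M ((a : G →₀ M) + (b : G →₀ M)) = _
      rw [map_add]; rfl) with hf
  have hfsurj : Function.Surjective f := by
    rintro ⟨q, hq⟩
    obtain ⟨y, hy⟩ := phi_surj G M q
    have hyk : y ∈ (barD1 G M).ker := by
      rw [AddMonoidHom.mem_ker, ← hcomp' y, hy]
      exact hq
    exact ⟨⟨y, hyk⟩, Subtype.ext hy⟩
  have hker : (barD2 G M).range.addSubgroupOf (barD1 G M).ker = f.ker := by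
    ext y
    rw [AddSubgroup.mem_addSubgroupOf, AddMonoidHom.mem_ker]
    constructor
    · rintro ⟨z, hz⟩
      apply Subtype.ext
      show phi G M (y : G →₀ M) = 0
      rw [← hz]
      exact DFunLike.congr_fun (phi_barD2 G M) z
    · intro h0
      have h1 : phi G M (y : G →₀ M) = 0 := congrArg Subtype.val h0
      have h2 : theta' G M (phi G M (y : G →₀ M)) = 0 := by rw [h1, map_zero]
      rw [theta'_phi] at h2
      rw [AddMonoidHom.mem_range]
      obtain ⟨z, hz⟩ := (QuotientAddGroup.eq_zero_iff _).1 h2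
      exact ⟨z, hz⟩
  rw [hker]
  exact ⟨QuotientAddGroup.quotientKerEquivOfSurjective f hfsurj⟩
end
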